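/- Let N ≥ 2, d ≥ 1, and let k ∈ ℤ satisfy Σ_{i=0}^{d} k^i ≡ 0 (mod N). Let Δ = conv(0, e_1, …, e_d) ⊂ ℝ^d and let Λ ⊂ ℝ^d be the additive subgroup generated by ℤ^d together with the point (1/N)(k, k^2, …, k^d). If k is not a primitive (d+1)-th root of unity modulo N, i.e., there exist 0 ≤ i < j ≤ d with k^i ≡ k^j (mod N), then there exists a nonzero linear functional f : ℝ^d → ℝ with f(Λ) ⊆ ℤ such that max_{x∈Δ} f(x) − min_{x∈Δ} f(x) ≤ 2; that is, the lattice width of Δ with respect to Λ is at most two. -/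

import Mathlib

open Set

/-- The set of integer points of `ℝ^n`. -/
def intPoints (n : ℕ) : Set (Fin n → ℝ) := {x | ∀ i, ∃ z : ℤ, x i = (z : ℝ)}

/-- The vertices `0, e_1, …, e_d` of the standard simplex in `ℝ^d`. -/
def stdVert (d : ℕ) : Fin (d+1) → Fin d → ℝ :=
  fun i j => if (i : ℕ) = (j : ℕ) + 1 then 1 else 0

lemma ind_sum (d j : ℕ) (hj1 : 1 ≤ j) (hjd : j ≤ d) (g : ℕ → ℤ) :
    ∑ m : Fin d, (if (m : ℕ) + 1 = j then g ((m : ℕ) + 1) else 0) = g j := by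
  rw [Fin.sum_univ_eq_sum_range (fun m => if m + 1 = j then g (m + 1) else 0)]
  have h1 : ∀ m ∈ Finset.range d,
      (if m + 1 = j then g (m + 1) else 0) = if m = j - 1 then g (m + 1) else 0 := by
    intro m _
    by_cases h : m + 1 = j
    · rw [if_pos h, if_pos (by omega)]
    · rw [if_neg h, if_neg (by omega)]
  rw [Finset.sum_congr rfl h1, Finset.sum_ite_eq' (Finset.range d) (j - 1)]
  rw [if_pos (Finset.mem_range.mpr (by omega))]
  congr 1
  omega

lemma pow_sum (d : ℕ) (k : ℤ) :
    ∑ m : Fin d, k ^ ((m : ℕ) + 1) = (∑ i ∈ Finset.range (d + 1), k ^ i) - 1 := by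
  rw [Fin.sum_univ_eq_sum_range (fun m => k ^ (m + 1)), Finset.sum_range_succ' (fun i => k ^ i)]
  simp

lemma key (d N : ℕ) (hN : 2 ≤ N) (k : ℤ) (c : Fin d → ℤ)
    (hdvd : (N : ℤ) ∣ ∑ m : Fin d, c m * k ^ ((m : ℕ) + 1))
    (m0 : Fin d) (hm0 : c m0 ≠ 0)
    (lo hi : ℤ) (hlo : lo ≤ 0) (hhi : 0 ≤ hi)
    (hrange : ∀ m, lo ≤ c m ∧ c m ≤ hi)
    (hwidth : hi - lo ≤ 2) :
    ∃ f : (Fin d → ℝ) →ₗ[ℝ] ℝ, f ≠ 0 ∧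
      (∀ x ∈ AddSubgroup.closure
          (intPoints d ∪ {fun j : Fin d => ((k ^ ((j : ℕ) + 1) : ℤ) : ℝ) / (N : ℝ)}),
        ∃ z : ℤ, f x = (z : ℝ)) ∧
      sSup (f '' convexHull ℝ (Set.range (stdVert d)))
        - sInf (f '' convexHull ℝ (Set.range (stdVert d))) ≤ 2 := by
  have hN0 : (N : ℝ) ≠ 0 := by positivity
  set f : (Fin d → ℝ) →ₗ[ℝ] ℝ := ∑ m : Fin d, (c m : ℝ) • LinearMap.proj m with hfdef
  have hf : ∀ x, f x = ∑ m : Fin d, (c m : ℝ) * x m := by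
    intro x
    simp [hfdef, LinearMap.proj_apply]
  refine ⟨f, ?_, ?_, ?_⟩
  · -- f ≠ 0
    intro h
    have h1 : f (Pi.single m0 1) = (c m0 : ℝ) := by
      rw [hf, Finset.sum_eq_single m0]
      · simp
      · intro m _ hm
        rw [Pi.single_eq_of_ne hm, mul_zero]
      · simp
    rw [h] at h1
    simp at h1
    exact hm0 (by exact_mod_cast h1.symm)
  · -- integrality on the lattice
    intro x hx
    induction hx using AddSubgroup.closure_induction with
    | mem x hx =>
      rcases hx with hx | hx
      · choose z hz using hx
        refine ⟨∑ m : Fin d, c m * z m, ?_⟩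
        rw [hf]
        push_cast
        exact Finset.sum_congr rfl fun m _ => by rw [hz m]
      · rcases hdvd with ⟨t, ht⟩
        refine ⟨t, ?_⟩
        simp only [Set.mem_singleton_iff] at hx
        subst hx
        rw [hf]
        have h2 : (∑ m : Fin d, (c m : ℝ) * (((k ^ ((m : ℕ) + 1) : ℤ) : ℝ) / (N : ℝ)))
            = ((∑ m : Fin d, c m * k ^ ((m : ℕ) + 1) : ℤ) : ℝ) / (N : ℝ) := by
          push_cast
          rw [Finset.sum_div]
          exact Finset.sum_congr rfl fun m _ => by ring
        rw [h2, ht]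
        push_cast
        field_simp
    | zero => exact ⟨0, by simp⟩
    | add x y _ _ hx hy =>
      rcases hx with ⟨z1, hz1⟩
      rcases hy with ⟨z2, hz2⟩
      exact ⟨z1 + z2, by rw [map_add, hz1, hz2]; push_cast; ring⟩
    | neg x _ hx =>
      rcases hx with ⟨z1, hz1⟩
      exact ⟨-z1, by rw [map_neg, hz1]; push_cast; ring⟩
  · -- width bound
    have hvert : ∀ i : Fin (d + 1),
        f (stdVert d i) ∈ Set.Icc (lo : ℝ) (hi : ℝ) := by
      intro i
      by_cases hi0 : (i : ℕ) = 0
      · have : f (stdVert d i) = 0 := by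
          rw [hf]
          apply Finset.sum_eq_zero
          intro m _
          rw [stdVert, if_neg (by omega), mul_zero]
        rw [this]
        constructor
        · exact_mod_cast hlo
        · exact_mod_cast hhi
      · have hlt : (i : ℕ) - 1 < d := by have := i.isLt; omega
        have : f (stdVert d i) = (c ⟨(i : ℕ) - 1, hlt⟩ : ℝ) := by
          rw [hf, Finset.sum_eq_single (⟨(i : ℕ) - 1, hlt⟩ : Fin d)]
          · rw [stdVert, if_pos (show (i:ℕ) = (i:ℕ) - 1 + 1 by omega), mul_one]
          · intro m _ hm
            have hm' : (m : ℕ) ≠ (i : ℕ) - 1 := fun hh => hm (Fin.ext hh)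
            rw [stdVert, if_neg (show ¬ (i:ℕ) = (m:ℕ) + 1 by omega), mul_zero]
          · simp
        rw [this]
        constructor
        · exact_mod_cast (hrange _).1
        · exact_mod_cast (hrange _).2
    have hsub : convexHull ℝ (Set.range (stdVert d)) ⊆ f ⁻¹' Set.Icc (lo : ℝ) (hi : ℝ) := by
      apply convexHull_min
      · rintro y ⟨i, rfl⟩
        exact hvert i
      · exact (convex_Icc _ _).linear_preimage f
    have hne : (f '' convexHull ℝ (Set.range (stdVert d))).Nonempty :=
      ⟨f (stdVert d 0), ⟨stdVert d 0, subset_convexHull ℝ _ ⟨0, rfl⟩, rfl⟩⟩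
    have hSup : sSup (f '' convexHull ℝ (Set.range (stdVert d))) ≤ (hi : ℝ) := by
      apply csSup_le hne
      rintro y ⟨x, hx, rfl⟩
      exact (hsub hx).2
    have hInf : (lo : ℝ) ≤ sInf (f '' convexHull ℝ (Set.range (stdVert d))) := by
      apply le_csInf hne
      rintro y ⟨x, hx, rfl⟩
      exact (hsub hx).1
    have : (hi : ℝ) - (lo : ℝ) ≤ 2 := by exact_mod_cast hwidth
    linarith

theorem stmt2 (d N : ℕ) (hN : 2 ≤ N) (hd : 1 ≤ d) (k : ℤ)
    (hroot : (N : ℤ) ∣ ∑ i ∈ Finset.range (d+1), k ^ i)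
    (hnonprim : ∃ i j : ℕ, i < j ∧ j ≤ d ∧ (N : ℤ) ∣ k ^ j - k ^ i) :
    ∃ f : (Fin d → ℝ) →ₗ[ℝ] ℝ, f ≠ 0 ∧
      (∀ x ∈ AddSubgroup.closure
          (intPoints d ∪ {fun j : Fin d => ((k ^ ((j : ℕ) + 1) : ℤ) : ℝ) / (N : ℝ)}),
        ∃ z : ℤ, f x = (z : ℝ)) ∧
      sSup (f '' convexHull ℝ (Set.range (stdVert d)))
        - sInf (f '' convexHull ℝ (Set.range (stdVert d))) ≤ 2 := by
  obtain ⟨i, j, hij, hjd, hdvd⟩ := hnonprim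
  by_cases hi0 : i = 0
  · -- k^j ≡ 1 (mod N)
    subst hi0
    have hj1 : 1 ≤ j := hij
    refine key d N hN k (fun m => if (m : ℕ) + 1 = j then 2 else 1) ?_
      ⟨0, by omega⟩ (show (if 0 + 1 = j then (2:ℤ) else 1) ≠ 0 by split <;> norm_num) 0 2 le_rfl (by norm_num)
      (fun m => show 0 ≤ (if (m:ℕ) + 1 = j then (2:ℤ) else 1) ∧ (if (m:ℕ) + 1 = j then (2:ℤ) else 1) ≤ 2 by split <;> omega) (by norm_num)
    have hsum : (∑ m : Fin d, (if (m : ℕ) + 1 = j then 2 else 1) * k ^ ((m : ℕ) + 1))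
        = ((∑ i ∈ Finset.range (d + 1), k ^ i) - 1) + k ^ j := by
      have h1 : ∀ m : Fin d, (if (m : ℕ) + 1 = j then (2 : ℤ) else 1) * k ^ ((m : ℕ) + 1)
          = k ^ ((m : ℕ) + 1) + (if (m : ℕ) + 1 = j then k ^ ((m : ℕ) + 1) else 0) := by
        intro m; split <;> ring
      rw [Finset.sum_congr rfl (fun m _ => h1 m), Finset.sum_add_distrib, pow_sum,
        ind_sum d j hj1 hjd (fun n => k ^ n)]
    rw [hsum]
    have : ((∑ i ∈ Finset.range (d + 1), k ^ i) - 1) + k ^ j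
        = (∑ i ∈ Finset.range (d + 1), k ^ i) + (k ^ j - k ^ 0) := by ring
    rw [this]
    exact dvd_add hroot hdvd
  · -- 1 ≤ i < j ≤ d
    have hi1 : 1 ≤ i := by omega
    refine key d N hN k
      (fun m => (if (m : ℕ) + 1 = i then 1 else 0) - (if (m : ℕ) + 1 = j then 1 else 0)) ?_
      ⟨i - 1, by omega⟩ (show ((if i - 1 + 1 = i then (1:ℤ) else 0) - (if i - 1 + 1 = j then 1 else 0)) ≠ 0 by rw [if_pos (by omega), if_neg (by omega)]; norm_num)
      (-1) 1 (by norm_num) (by norm_num)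
      (fun m => show -1 ≤ ((if (m:ℕ) + 1 = i then (1:ℤ) else 0) - (if (m:ℕ) + 1 = j then 1 else 0)) ∧ ((if (m:ℕ) + 1 = i then (1:ℤ) else 0) - (if (m:ℕ) + 1 = j then 1 else 0)) ≤ 1 by split <;> split <;> omega) (by norm_num)
    have hsum : (∑ m : Fin d,
        ((if (m : ℕ) + 1 = i then (1:ℤ) else 0) - (if (m : ℕ) + 1 = j then 1 else 0))
          * k ^ ((m : ℕ) + 1)) = k ^ i - k ^ j := by
      have h1 : ∀ m : Fin d,
          ((if (m : ℕ) + 1 = i then (1:ℤ) else 0) - (if (m : ℕ) + 1 = j then 1 else 0))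
            * k ^ ((m : ℕ) + 1)
          = (if (m : ℕ) + 1 = i then k ^ ((m : ℕ) + 1) else 0)
            - (if (m : ℕ) + 1 = j then k ^ ((m : ℕ) + 1) else 0) := by
        intro m; split <;> split <;> ring
      rw [Finset.sum_congr rfl (fun m _ => h1 m), Finset.sum_sub_distrib,
        ind_sum d i hi1 (by omega) (fun n => k ^ n), ind_sum d j (by omega) hjd (fun n => k ^ n)]
    rw [hsum]
    exact (dvd_sub_comm.mp hdvd)
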